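/- Let G be a connected graph with maximum degree at most 4, not the octahedron. If T and T' are inner triangles with T ∩ T' = {x,y}, then N(x) induces a 4-cycle, the only ear of Q_T that is an inner triangle is T', and the only normal vertices of T are x and y. -/

import Mathlib

universe u

variable {V : Type u}

/-- A clique of `G` in the sense of the paper: a maximal complete subgraph,
represented as a finset of vertices. -/
def MaxClique (G : SimpleGraph V) (s : Finset V) : Prop :=
  G.IsClique (s : Set V) ∧ ∀ t : Finset V, G.IsClique (t : Set V) → s ⊆ t → s = t

/-- A pairwise-intersecting family of finsets. -/
def PairwiseIntersecting (Q : Set (Finset V)) : Prop :=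
  ∀ q ∈ Q, ∀ r ∈ Q, ∃ v, v ∈ q ∧ v ∈ r

/-- A clique of the clique graph `K(G)`: a maximal pairwise-intersecting family of
cliques of `G`. -/
def IsCliqueOfCliques (G : SimpleGraph V) (Q : Set (Finset V)) : Prop :=
  (∀ q ∈ Q, MaxClique G q) ∧ PairwiseIntersecting Q ∧
    ∀ Q' : Set (Finset V), Q ⊆ Q' → (∀ q ∈ Q', MaxClique G q) →
      PairwiseIntersecting Q' → Q' = Q

/-- A necktie: a clique of `K(G)` with empty total intersection. -/
def IsNecktie (G : SimpleGraph V) (Q : Set (Finset V)) : Prop :=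
  IsCliqueOfCliques G Q ∧ ¬ ∃ v, ∀ q ∈ Q, v ∈ q

/-- The star of a vertex: the family of cliques of `G` containing it. -/
def starOf (G : SimpleGraph V) (x : V) : Set (Finset V) :=
  {q | MaxClique G q ∧ x ∈ q}

/-- A vertex is normal when its star is a clique of `K(G)`. -/
def IsNormal (G : SimpleGraph V) (x : V) : Prop :=
  IsCliqueOfCliques G (starOf G x)

/-- A triangle: a complete subgraph with three vertices. -/
def IsTriangle (G : SimpleGraph V) (T : Finset V) : Prop :=
  G.IsClique (T : Set V) ∧ T.card = 3

/-- An inner triangle: a triangle that is a clique and such that each of its edges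
lies in a triangle different from `T`. -/
def IsInnerTriangle [DecidableEq V] (G : SimpleGraph V) (T : Finset V) : Prop :=
  MaxClique G T ∧ T.card = 3 ∧
    ∀ x ∈ T, ∀ y ∈ T, x ≠ y →
      ∃ T' : Finset V, IsTriangle G T' ∧ T' ≠ T ∧ T ∩ T' = ({x, y} : Finset V)

/-- `Q_T`: the family of cliques meeting the triangle `T` in at least two vertices. -/
def QT [DecidableEq V] (G : SimpleGraph V) (T : Finset V) : Set (Finset V) :=
  {q | MaxClique G q ∧ 2 ≤ (q ∩ T).card}

/-- Adjacency between two vertices of `K²(G)` (i.e. cliques of `K(G)`):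
they are distinct and intersect. -/
def Adj2 (A B : Set (Finset V)) : Prop :=
  A ≠ B ∧ ∃ q, q ∈ A ∧ q ∈ B

/-- `s` induces a 4-cycle in `G`. -/
def InducesC4 [DecidableEq V] (G : SimpleGraph V) (s : Finset V) : Prop :=
  ∃ a b c d : V, a ≠ b ∧ a ≠ c ∧ a ≠ d ∧ b ≠ c ∧ b ≠ d ∧ c ≠ d ∧
    s = ({a, b, c, d} : Finset V) ∧
    G.Adj a b ∧ G.Adj b c ∧ G.Adj c d ∧ G.Adj d a ∧ ¬ G.Adj a c ∧ ¬ G.Adj b d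

/-- The octahedron, i.e. the complete tripartite graph `K_{2,2,2}`. -/
def octahedron : SimpleGraph (Fin 3 × Fin 2) where
  Adj a b := a.1 ≠ b.1
  symm := ⟨fun _ _ h => h.symm⟩
  loopless := ⟨fun _ h => h rfl⟩

/-- The clique graph `K(G)`: the intersection graph of the cliques of `G`. -/
def cliqueGraph (G : SimpleGraph V) : SimpleGraph {q : Finset V // MaxClique G q} where
  Adj q r := q ≠ r ∧ ∃ v, v ∈ q.1 ∧ v ∈ r.1
  symm := ⟨fun _ _ (h : _ ∧ _) => ⟨h.1.symm, h.2.imp fun _ hv => ⟨hv.2, hv.1⟩⟩⟩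
  loopless := ⟨fun _ (h : _ ∧ _) => h.1 rfl⟩

/-- A graph is clique-Helly when its family of cliques has the Helly property. -/
def CliqueHelly {W : Type*} (H : SimpleGraph W) : Prop :=
  ∀ F : Set (Finset W), F.Nonempty → (∀ q ∈ F, MaxClique H q) →
    PairwiseIntersecting F → ∃ v, ∀ q ∈ F, v ∈ q

/-- Hereditary clique-Helly: every induced subgraph is clique-Helly. -/
def HereditaryCliqueHelly {W : Type*} (H : SimpleGraph W) : Prop :=
  ∀ s : Set W, CliqueHelly (SimpleGraph.induce s H)

/-- A finite graph packaged with its vertex type, to allow iterating `K`. -/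
structure FGraph where
  V : Type u
  fin : Fintype V
  G : SimpleGraph V

/-- The clique graph operator on packaged finite graphs. -/
noncomputable def FGraph.K (F : FGraph) : FGraph where
  V := {q : Finset F.V // MaxClique F.G q}
  fin := by
    haveI := F.fin
    classical
    exact Subtype.fintype _
  G := cliqueGraph F.G

/-- Iterated clique graphs: `iterK F n` packages `Kⁿ(G)`. -/
noncomputable def iterK (F : FGraph) : ℕ → FGraph
  | 0 => F
  | n + 1 => (iterK F n).K


section AuxLemmas
variable {V : Type u}

lemma maxClique_of {G : SimpleGraph V} {s : Finset V} (hc : G.IsClique (s : Set V))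
    (h : ∀ v, v ∉ s → ∃ u ∈ s, ¬ G.Adj v u) : MaxClique G s := by
  refine ⟨hc, fun t ht hst => ?_⟩
  by_contra hne
  obtain ⟨v, hvt, hvs⟩ := Finset.exists_of_ssubset (hst.ssubset_of_ne hne)
  obtain ⟨u, hus, hnadj⟩ := h v hvs
  exact hnadj (ht hvt (hst hus) (fun he => hvs (he ▸ hus)))

lemma triple_eq {T : Finset V} {x y : V} [DecidableEq V] (hx : x ∈ T) (hy : y ∈ T)
    (hne : x ≠ y) (hcard : T.card = 3) : ∃ z, z ≠ x ∧ z ≠ y ∧ T = {x, y, z} := by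
  have hsub : ({x, y} : Finset V) ⊆ T := by
    intro t ht; simp at ht; rcases ht with h | h <;> subst h <;> assumption
  have hcard2 : ({x, y} : Finset V).card = 2 := by
    rw [Finset.card_insert_of_notMem (by simp [hne]), Finset.card_singleton]
  have : (T \ {x, y}).Nonempty := by
    rw [← Finset.card_pos, Finset.card_sdiff_of_subset hsub, hcard, hcard2]; norm_num
  obtain ⟨z, hz⟩ := this
  rw [Finset.mem_sdiff, Finset.mem_insert, Finset.mem_singleton] at hz
  push_neg at hz
  refine ⟨z, hz.2.1, hz.2.2, ?_⟩
  apply (Finset.eq_of_subset_of_card_le ?_ ?_).symm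
  · intro t ht; simp at ht
    rcases ht with h | h | h <;> subst h
    exacts [hx, hy, hz.1]
  · rw [hcard, Finset.card_insert_of_notMem (by simp [hne, Ne.symm hz.2.1]),
      Finset.card_insert_of_notMem (by simp [Ne.symm hz.2.2]), Finset.card_singleton]

lemma isClique_triple [DecidableEq V] {G : SimpleGraph V} {a b c : V}
    (hab : G.Adj a b) (hac : G.Adj a c) (hbc : G.Adj b c) :
    G.IsClique (({a, b, c} : Finset V) : Set V) := by
  intro s hs t ht hst
  simp only [Finset.coe_insert, Set.mem_insert_iff, Finset.coe_singleton,
    Set.mem_singleton_iff] at hs ht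
  rcases hs with rfl | rfl | rfl <;> rcases ht with rfl | rfl | rfl
  exacts [(hst rfl).elim, hab, hac, hab.symm, (hst rfl).elim, hbc, hac.symm, hbc.symm,
    (hst rfl).elim]

lemma neighborFinset_eq_four [Fintype V] [DecidableEq V] {G : SimpleGraph V}
    [DecidableRel G.Adj] (hdeg : ∀ t, G.degree t ≤ 4) {a b c d e : V}
    (h1 : G.Adj a b) (h2 : G.Adj a c) (h3 : G.Adj a d) (h4 : G.Adj a e)
    (hbc : b ≠ c) (hbd : b ≠ d) (hbe : b ≠ e) (hcd : c ≠ d) (hce : c ≠ e) (hde : d ≠ e) :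
    G.neighborFinset a = {b, c, d, e} := by
  refine (Finset.eq_of_subset_of_card_le ?_ ?_).symm
  · intro t ht
    simp only [Finset.mem_insert, Finset.mem_singleton] at ht
    rw [SimpleGraph.mem_neighborFinset]
    rcases ht with rfl | rfl | rfl | rfl <;> assumption
  · rw [SimpleGraph.card_neighborFinset_eq_degree,
      Finset.card_insert_of_notMem (by simp [hbc, hbd, hbe]),
      Finset.card_insert_of_notMem (by simp [hcd, hce]),
      Finset.card_insert_of_notMem (by simp [hde]), Finset.card_singleton]
    exact hdeg a

def octInv (x y z w u v : V) : Fin 3 × Fin 2 → V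
  | (0, 0) => x
  | (0, 1) => v
  | (1, 0) => y
  | (1, 1) => u
  | (2, 0) => z
  | (2, 1) => w

lemma octInv_injective [DecidableEq V] {x y z w u v : V}
    (hxy : x ≠ y) (hxz : x ≠ z) (hxw : x ≠ w) (hxu : x ≠ u) (hxv : x ≠ v)
    (hyz : y ≠ z) (hyw : y ≠ w) (hyu : y ≠ u) (hyv : y ≠ v)
    (hzw : z ≠ w) (hzu : z ≠ u) (hzv : z ≠ v) (hwu : w ≠ u) (hwv : w ≠ v) (huv : u ≠ v) :
    Function.Injective (octInv x y z w u v) := by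
  intro p q h
  fin_cases p <;> fin_cases q <;> simp_all [octInv]

lemma octInv_rel {G : SimpleGraph V} {x y z w u v : V}
    (axy : G.Adj x y) (axz : G.Adj x z) (axw : G.Adj x w) (axu : G.Adj x u)
    (ayz : G.Adj y z) (ayw : G.Adj y w) (ayv : G.Adj y v)
    (azu : G.Adj z u) (azv : G.Adj z v) (awu : G.Adj w u) (awv : G.Adj w v)
    (auv : G.Adj u v)
    (nxv : ¬ G.Adj x v) (nyu : ¬ G.Adj y u) (nzw : ¬ G.Adj z w) :
    ∀ p q : Fin 3 × Fin 2,
      G.Adj (octInv x y z w u v p) (octInv x y z w u v q) ↔ octahedron.Adj p q := by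
  intro p q
  fin_cases p <;> fin_cases q <;> simp_all [octInv, octahedron, G.adj_comm]

lemma oct_contra [Fintype V] [DecidableEq V] (G : SimpleGraph V) [DecidableRel G.Adj]
    (hconn : G.Connected) (x y z w u v : V)
    (hNx : G.neighborFinset x = {y, z, w, u}) (hNy : G.neighborFinset y = {x, z, w, v})
    (hNz : G.neighborFinset z = {x, y, u, v}) (hNw : G.neighborFinset w = {x, y, u, v})
    (hNu : G.neighborFinset u = {x, z, w, v}) (hNv : G.neighborFinset v = {y, z, w, u})
    (hxy : x ≠ y) (hxz : x ≠ z) (hxw : x ≠ w) (hxu : x ≠ u) (hxv : x ≠ v)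
    (hyz : y ≠ z) (hyw : y ≠ w) (hyu : y ≠ u) (hyv : y ≠ v)
    (hzw : z ≠ w) (hzu : z ≠ u) (hzv : z ≠ v) (hwu : w ≠ u) (hwv : w ≠ v) (huv : u ≠ v)
    (axy : G.Adj x y) (axz : G.Adj x z) (axw : G.Adj x w) (axu : G.Adj x u)
    (ayz : G.Adj y z) (ayw : G.Adj y w) (ayv : G.Adj y v)
    (azu : G.Adj z u) (azv : G.Adj z v) (awu : G.Adj w u) (awv : G.Adj w v)
    (auv : G.Adj u v)
    (nxv : ¬ G.Adj x v) (nyu : ¬ G.Adj y u) (nzw : ¬ G.Adj z w) :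
    Nonempty (G ≃g octahedron) := by
  classical
  set S : Finset V := {x, y, z, w, u, v} with hS
  have hclosed : ∀ a ∈ S, ∀ b, G.Adj a b → b ∈ S := by
    intro a ha b hab
    have hb : b ∈ G.neighborFinset a := by rwa [SimpleGraph.mem_neighborFinset]
    simp only [hS, Finset.mem_insert, Finset.mem_singleton] at ha ⊢
    rcases ha with rfl | rfl | rfl | rfl | rfl | rfl <;>
      [rw [hNx] at hb; rw [hNy] at hb; rw [hNz] at hb; rw [hNw] at hb;
       rw [hNu] at hb; rw [hNv] at hb] <;>
      simp only [Finset.mem_insert, Finset.mem_singleton] at hb <;> tauto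
  have hall : ∀ t : V, t ∈ S := by
    have key : ∀ (a t : V), G.Walk a t → a ∈ S → t ∈ S := by
      intro a t p
      induction p with
      | nil => exact id
      | cons h _ ih => exact fun ha => ih (hclosed _ ha _ h)
    intro t
    obtain ⟨p⟩ := hconn.preconnected x t
    exact key x t p (by simp [hS])
  have hinj : Function.Injective (octInv x y z w u v) :=
    octInv_injective hxy hxz hxw hxu hxv hyz hyw hyu hyv hzw hzu hzv hwu hwv huv
  have hsurj : Function.Surjective (octInv x y z w u v) := by
    intro t
    have := hall t
    simp only [hS, Finset.mem_insert, Finset.mem_singleton] at this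
    rcases this with rfl | rfl | rfl | rfl | rfl | rfl
    exacts [⟨(0,0), rfl⟩, ⟨(1,0), rfl⟩, ⟨(2,0), rfl⟩, ⟨(2,1), rfl⟩, ⟨(1,1), rfl⟩, ⟨(0,1), rfl⟩]
  have hrel := octInv_rel axy axz axw axu ayz ayw ayv azu azv awu awv auv nxv nyu nzw
  let e : Fin 3 × Fin 2 ≃ V := Equiv.ofBijective _ ⟨hinj, hsurj⟩
  have iso : octahedron ≃g G := ⟨e, by intro p q; exact hrel p q⟩
  exact ⟨iso.symm⟩

end AuxLemmas

theorem stmt10 {V : Type u} [Fintype V] [DecidableEq V] (G : SimpleGraph V)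
    [DecidableRel G.Adj] (hconn : G.Connected) (hdeg : ∀ v, G.degree v ≤ 4)
    (hoct : ¬ Nonempty (G ≃g octahedron))
    (T T' : Finset V) (x y : V) (hne : x ≠ y)
    (hT : IsInnerTriangle G T) (hT' : IsInnerTriangle G T')
    (hxy : T ∩ T' = ({x, y} : Finset V)) :
    InducesC4 G (G.neighborFinset x) ∧
    (∀ q ∈ QT G T, q ≠ T → (IsInnerTriangle G q ↔ q = T')) ∧
    (∀ v ∈ T, (IsNormal G v ↔ (v = x ∨ v = y))) := by
  classical
  obtain ⟨hTmax, hTcard, hTinner⟩ := hT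
  obtain ⟨hT'max, hT'card, hT'inner⟩ := hT'
  have adjOf : ∀ (s : Finset V), G.IsClique (s : Set V) →
      ∀ a ∈ s, ∀ b ∈ s, a ≠ b → G.Adj a b :=
    fun s hs a ha b hb hab => hs (Finset.mem_coe.mpr ha) (Finset.mem_coe.mpr hb) hab
  have hxT : x ∈ T := by
    have : x ∈ T ∩ T' := by rw [hxy]; simp
    exact (Finset.mem_inter.mp this).1
  have hxT' : x ∈ T' := by
    have : x ∈ T ∩ T' := by rw [hxy]; simp
    exact (Finset.mem_inter.mp this).2
  have hyT : y ∈ T := by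
    have : y ∈ T ∩ T' := by rw [hxy]; simp
    exact (Finset.mem_inter.mp this).1
  have hyT' : y ∈ T' := by
    have : y ∈ T ∩ T' := by rw [hxy]; simp
    exact (Finset.mem_inter.mp this).2
  obtain ⟨z, hzx, hzy, hTz⟩ := triple_eq hxT hyT hne hTcard
  obtain ⟨w, hwx, hwy, hT'w⟩ := triple_eq hxT' hyT' hne hT'card
  have hzT : z ∈ T := by rw [hTz]; simp
  have hwT' : w ∈ T' := by rw [hT'w]; simp
  have hzT' : z ∉ T' := by
    intro h
    have : z ∈ T ∩ T' := Finset.mem_inter.mpr ⟨hzT, h⟩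
    rw [hxy] at this; simp at this
    rcases this with h' | h'
    exacts [hzx h', hzy h']
  have hwT : w ∉ T := by
    intro h
    have : w ∈ T ∩ T' := Finset.mem_inter.mpr ⟨h, hwT'⟩
    rw [hxy] at this; simp at this
    rcases this with h' | h'
    exacts [hwx h', hwy h']
  have hzw : z ≠ w := fun h => hwT (h ▸ hzT)
  have axy : G.Adj x y := adjOf T hTmax.1 x hxT y hyT hne
  have axz : G.Adj x z := adjOf T hTmax.1 x hxT z hzT (Ne.symm hzx)
  have ayz : G.Adj y z := adjOf T hTmax.1 y hyT z hzT (Ne.symm hzy)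
  have axw : G.Adj x w := adjOf T' hT'max.1 x hxT' w hwT' (Ne.symm hwx)
  have ayw : G.Adj y w := adjOf T' hT'max.1 y hyT' w hwT' (Ne.symm hwy)
  have nzw : ¬ G.Adj z w := by
    intro h
    have hclique : G.IsClique ((insert w T : Finset V) : Set V) := by
      rw [Finset.coe_insert]
      refine hTmax.1.insert ?_
      intro b hb hne'
      rw [hTz] at hb
      simp only [Finset.coe_insert, Set.mem_insert_iff, Finset.coe_singleton,
        Set.mem_singleton_iff] at hb
      rcases hb with rfl | rfl | rfl
      exacts [axw.symm, ayw.symm, h.symm]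
    have heq := hTmax.2 _ hclique (Finset.subset_insert _ _)
    exact hwT (heq ▸ Finset.mem_insert_self w T)
  -- the vertex u on edge xz
  obtain ⟨S1, hS1tri, hS1ne, hS1cap⟩ := hTinner x hxT z hzT (Ne.symm hzx)
  have hxS1 : x ∈ S1 := by
    have : x ∈ T ∩ S1 := by rw [hS1cap]; simp
    exact (Finset.mem_inter.mp this).2
  have hzS1 : z ∈ S1 := by
    have : z ∈ T ∩ S1 := by rw [hS1cap]; simp
    exact (Finset.mem_inter.mp this).2
  obtain ⟨u, hux, huz, hS1u⟩ := triple_eq hxS1 hzS1 (Ne.symm hzx) hS1tri.2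
  have huT : u ∉ T := by
    intro h
    have : u ∈ T ∩ S1 := Finset.mem_inter.mpr ⟨h, by rw [hS1u]; simp⟩
    rw [hS1cap] at this; simp at this
    rcases this with h' | h'
    exacts [hux h', huz h']
  have huy : u ≠ y := fun h => huT (h ▸ hyT)
  have huS1 : u ∈ S1 := by rw [hS1u]; simp
  have axu : G.Adj x u := adjOf S1 hS1tri.1 x hxS1 u huS1 (Ne.symm hux)
  have azu : G.Adj z u := adjOf S1 hS1tri.1 z hzS1 u huS1 (Ne.symm huz)
  have huw : u ≠ w := fun h => nzw (h ▸ azu)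
  -- the vertex v on edge yz
  obtain ⟨S2, hS2tri, hS2ne, hS2cap⟩ := hTinner y hyT z hzT (Ne.symm hzy)
  have hyS2 : y ∈ S2 := by
    have : y ∈ T ∩ S2 := by rw [hS2cap]; simp
    exact (Finset.mem_inter.mp this).2
  have hzS2 : z ∈ S2 := by
    have : z ∈ T ∩ S2 := by rw [hS2cap]; simp
    exact (Finset.mem_inter.mp this).2
  obtain ⟨v, hvy, hvz, hS2v⟩ := triple_eq hyS2 hzS2 (Ne.symm hzy) hS2tri.2
  have hvT : v ∉ T := by
    intro h
    have : v ∈ T ∩ S2 := Finset.mem_inter.mpr ⟨h, by rw [hS2v]; simp⟩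
    rw [hS2cap] at this; simp at this
    rcases this with h' | h'
    exacts [hvy h', hvz h']
  have hvx : v ≠ x := fun h => hvT (h ▸ hxT)
  have hvS2 : v ∈ S2 := by rw [hS2v]; simp
  have ayv : G.Adj y v := adjOf S2 hS2tri.1 y hyS2 v hvS2 (Ne.symm hvy)
  have azv : G.Adj z v := adjOf S2 hS2tri.1 z hzS2 v hvS2 (Ne.symm hvz)
  have hvw : v ≠ w := fun h => nzw (h ▸ azv)
  -- neighborhoods of x and y
  have hNx : G.neighborFinset x = {y, z, w, u} :=
    neighborFinset_eq_four hdeg axy axz axw axu (Ne.symm hzy) (Ne.symm hwy) (Ne.symm huy)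
      hzw (Ne.symm huz) (Ne.symm huw)
  have hNy : G.neighborFinset y = {x, z, w, v} :=
    neighborFinset_eq_four hdeg axy.symm ayz ayw ayv (Ne.symm hzx) (Ne.symm hwx)
      (Ne.symm hvx) hzw (Ne.symm hvz) (Ne.symm hvw)
  -- u is adjacent to w
  have auw : G.Adj u w := by
    obtain ⟨S3, hS3tri, hS3ne, hS3cap⟩ := hT'inner x hxT' w hwT' (Ne.symm hwx)
    have hxS3 : x ∈ S3 := by
      have : x ∈ T' ∩ S3 := by rw [hS3cap]; simp
      exact (Finset.mem_inter.mp this).2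
    have hwS3 : w ∈ S3 := by
      have : w ∈ T' ∩ S3 := by rw [hS3cap]; simp
      exact (Finset.mem_inter.mp this).2
    obtain ⟨p, hpx, hpw, hS3p⟩ := triple_eq hxS3 hwS3 (Ne.symm hwx) hS3tri.2
    have hpT' : p ∉ T' := by
      intro h
      have : p ∈ T' ∩ S3 := Finset.mem_inter.mpr ⟨h, by rw [hS3p]; simp⟩
      rw [hS3cap] at this; simp at this
      rcases this with h' | h'
      exacts [hpx h', hpw h']
    have hpy : p ≠ y := fun h => hpT' (h ▸ hyT')
    have hpS3 : p ∈ S3 := by rw [hS3p]; simp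
    have axp : G.Adj x p := adjOf S3 hS3tri.1 x hxS3 p hpS3 (Ne.symm hpx)
    have awp : G.Adj w p := adjOf S3 hS3tri.1 w hwS3 p hpS3 (Ne.symm hpw)
    have : p ∈ G.neighborFinset x := (SimpleGraph.mem_neighborFinset _ _ _).mpr axp
    rw [hNx] at this; simp at this
    rcases this with rfl | rfl | rfl | rfl
    exacts [(hpy rfl).elim, (nzw awp.symm).elim, (hpw rfl).elim, awp.symm]
  -- v is adjacent to w
  have avw : G.Adj v w := by
    obtain ⟨S3, hS3tri, hS3ne, hS3cap⟩ := hT'inner y hyT' w hwT' (Ne.symm hwy)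
    have hyS3 : y ∈ S3 := by
      have : y ∈ T' ∩ S3 := by rw [hS3cap]; simp
      exact (Finset.mem_inter.mp this).2
    have hwS3 : w ∈ S3 := by
      have : w ∈ T' ∩ S3 := by rw [hS3cap]; simp
      exact (Finset.mem_inter.mp this).2
    obtain ⟨p, hpy, hpw, hS3p⟩ := triple_eq hyS3 hwS3 (Ne.symm hwy) hS3tri.2
    have hpT' : p ∉ T' := by
      intro h
      have : p ∈ T' ∩ S3 := Finset.mem_inter.mpr ⟨h, by rw [hS3p]; simp⟩
      rw [hS3cap] at this; simp at this
      rcases this with h' | h'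
      exacts [hpy h', hpw h']
    have hpx : p ≠ x := fun h => hpT' (h ▸ hxT')
    have hpS3 : p ∈ S3 := by rw [hS3p]; simp
    have ayp : G.Adj y p := adjOf S3 hS3tri.1 y hyS3 p hpS3 (Ne.symm hpy)
    have awp : G.Adj w p := adjOf S3 hS3tri.1 w hwS3 p hpS3 (Ne.symm hpw)
    have : p ∈ G.neighborFinset y := (SimpleGraph.mem_neighborFinset _ _ _).mpr ayp
    rw [hNy] at this; simp at this
    rcases this with rfl | rfl | rfl | rfl
    exacts [(hpx rfl).elim, (nzw awp.symm).elim, (hpw rfl).elim, awp.symm]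
  -- u ≠ v
  have huv : u ≠ v := by
    intro h
    have hclique : G.IsClique ((insert u T : Finset V) : Set V) := by
      rw [Finset.coe_insert]
      refine hTmax.1.insert ?_
      intro b hb hne'
      rw [hTz] at hb
      simp only [Finset.coe_insert, Set.mem_insert_iff, Finset.coe_singleton,
        Set.mem_singleton_iff] at hb
      rcases hb with rfl | rfl | rfl
      exacts [axu.symm, (h ▸ ayv.symm : G.Adj u b), azu.symm]
    have heq := hTmax.2 _ hclique (Finset.subset_insert _ _)
    exact huT (heq ▸ Finset.mem_insert_self u T)
  -- key non-adjacencies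
  have nyu : ¬ G.Adj y u := by
    intro h
    have : u ∈ G.neighborFinset y := (SimpleGraph.mem_neighborFinset _ _ _).mpr h
    rw [hNy] at this; simp at this
    rcases this with h' | h' | h' | h'
    exacts [hux h', huz h', huw h', huv h']
  have nxv : ¬ G.Adj x v := by
    intro h
    have : v ∈ G.neighborFinset x := (SimpleGraph.mem_neighborFinset _ _ _).mpr h
    rw [hNx] at this; simp at this
    rcases this with h' | h' | h' | h'
    exacts [hvy h', hvz h', hvw h', huv h'.symm]
  -- neighborhoods of z and w
  have hNz : G.neighborFinset z = {x, y, u, v} :=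
    neighborFinset_eq_four hdeg axz.symm ayz.symm azu azv hne (Ne.symm hux)
      (Ne.symm hvx) (Ne.symm huy) (Ne.symm hvy) huv
  have hNw : G.neighborFinset w = {x, y, u, v} :=
    neighborFinset_eq_four hdeg axw.symm ayw.symm auw.symm avw.symm hne (Ne.symm hux)
      (Ne.symm hvx) (Ne.symm huy) (Ne.symm hvy) huv
  -- u is not adjacent to v, else G is the octahedron
  have nuv : ¬ G.Adj u v := by
    intro h
    have hNu : G.neighborFinset u = {x, z, w, v} :=
      neighborFinset_eq_four hdeg axu.symm azu.symm auw h (Ne.symm hzx) (Ne.symm hwx)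
        (Ne.symm hvx) hzw (Ne.symm hvz) (Ne.symm hvw)
    have hNv : G.neighborFinset v = {y, z, w, u} :=
      neighborFinset_eq_four hdeg ayv.symm azv.symm avw h.symm (Ne.symm hzy)
        (Ne.symm hwy) (Ne.symm huy) hzw (Ne.symm huz) (Ne.symm huw)
    exact hoct (oct_contra G hconn x y z w u v hNx hNy hNz hNw hNu hNv
      hne (Ne.symm hzx) (Ne.symm hwx) (Ne.symm hux) (Ne.symm hvx)
      (Ne.symm hzy) (Ne.symm hwy) (Ne.symm huy) (Ne.symm hvy)
      hzw (Ne.symm huz) (Ne.symm hvz) (Ne.symm huw) (Ne.symm hvw) huv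
      axy axz axw axu ayz ayw ayv azu azv auw.symm avw.symm h nxv nyu nzw)
  -- maximal triangles at x and y
  have Mxzu : MaxClique G {x, z, u} := by
    refine maxClique_of (isClique_triple axz axu azu) ?_
    intro t ht
    by_cases hadj : G.Adj t x
    · have : t ∈ G.neighborFinset x := (SimpleGraph.mem_neighborFinset _ _ _).mpr hadj.symm
      rw [hNx] at this; simp at this
      rcases this with rfl | rfl | rfl | rfl
      · exact ⟨u, by simp, nyu⟩
      · exact (ht (by simp)).elim
      · exact ⟨z, by simp, fun h' => nzw h'.symm⟩
      · exact (ht (by simp)).elim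
    · exact ⟨x, by simp, hadj⟩
  have Mxwu : MaxClique G {x, w, u} := by
    refine maxClique_of (isClique_triple axw axu auw.symm) ?_
    intro t ht
    by_cases hadj : G.Adj t x
    · have : t ∈ G.neighborFinset x := (SimpleGraph.mem_neighborFinset _ _ _).mpr hadj.symm
      rw [hNx] at this; simp at this
      rcases this with rfl | rfl | rfl | rfl
      · exact ⟨u, by simp, nyu⟩
      · exact ⟨w, by simp, nzw⟩
      · exact (ht (by simp)).elim
      · exact (ht (by simp)).elim
    · exact ⟨x, by simp, hadj⟩
  have Myzv : MaxClique G {y, z, v} := by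
    refine maxClique_of (isClique_triple ayz ayv azv) ?_
    intro t ht
    by_cases hadj : G.Adj t y
    · have : t ∈ G.neighborFinset y := (SimpleGraph.mem_neighborFinset _ _ _).mpr hadj.symm
      rw [hNy] at this; simp at this
      rcases this with rfl | rfl | rfl | rfl
      · exact ⟨v, by simp, nxv⟩
      · exact (ht (by simp)).elim
      · exact ⟨z, by simp, fun h' => nzw h'.symm⟩
      · exact (ht (by simp)).elim
    · exact ⟨y, by simp, hadj⟩
  have Mywv : MaxClique G {y, w, v} := by
    refine maxClique_of (isClique_triple ayw ayv avw.symm) ?_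
    intro t ht
    by_cases hadj : G.Adj t y
    · have : t ∈ G.neighborFinset y := (SimpleGraph.mem_neighborFinset _ _ _).mpr hadj.symm
      rw [hNy] at this; simp at this
      rcases this with rfl | rfl | rfl | rfl
      · exact ⟨v, by simp, nxv⟩
      · exact ⟨w, by simp, nzw⟩
      · exact (ht (by simp)).elim
      · exact (ht (by simp)).elim
    · exact ⟨y, by simp, hadj⟩
  refine ⟨?_, ?_, ?_⟩
  · -- N(x) induces a C4
    refine ⟨z, y, w, u, hzy, hzw, Ne.symm huz, Ne.symm hwy, Ne.symm huy, Ne.symm huw,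
      ?_, ayz.symm, ayw, auw.symm, azu.symm, nzw, nyu⟩
    rw [hNx]
    ext t; simp; tauto
  · -- ears of Q_T
    intro q hq hqT
    obtain ⟨hqmax, hqcard⟩ := hq
    have hqadj : ∀ a ∈ q, ∀ b ∈ q, a ≠ b → G.Adj a b := adjOf q hqmax.1
    by_cases hxq : x ∈ q <;> by_cases hyq : y ∈ q <;> by_cases hzq : z ∈ q
    · -- x, y, z ∈ q : impossible
      exfalso
      have hsub : T ⊆ q := by
        intro t ht; rw [hTz] at ht; simp at ht
        rcases ht with rfl | rfl | rfl <;> assumption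
      exact hqT (hTmax.2 q hqmax.1 hsub).symm
    · -- x, y ∈ q, z ∉ q : q = T'
      have hsub : q ⊆ {x, y, w} := by
        intro b hb
        by_cases hbx : b = x
        · simp [hbx]
        by_cases hby : b = y
        · simp [hby]
        have hbNx : b ∈ G.neighborFinset x :=
          (SimpleGraph.mem_neighborFinset _ _ _).mpr (hqadj x hxq b hb (fun h => hbx h.symm))
        have hbNy : b ∈ G.neighborFinset y :=
          (SimpleGraph.mem_neighborFinset _ _ _).mpr (hqadj y hyq b hb (fun h => hby h.symm))
        rw [hNx] at hbNx; simp at hbNx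
        rw [hNy] at hbNy; simp at hbNy
        rcases hbNx with rfl | rfl | rfl | rfl
        · exact (hby rfl).elim
        · exact (hzq hb).elim
        · simp
        · rcases hbNy with h' | h' | h' | h'
          exacts [(hux h').elim, (huz h').elim, (huw h').elim, (huv h').elim]
      have hq' : q = T' := by
        rw [hT'w]; exact hqmax.2 _ (isClique_triple axy axw ayw) hsub
      exact iff_of_true (hq' ▸ ⟨hT'max, hT'card, hT'inner⟩) hq'
    · -- x, z ∈ q, y ∉ q : q = {x,z,u}, not inner
      have hsub : q ⊆ {x, z, u} := by
        intro b hb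
        by_cases hbx : b = x
        · simp [hbx]
        by_cases hbz : b = z
        · simp [hbz]
        have hbNx : b ∈ G.neighborFinset x :=
          (SimpleGraph.mem_neighborFinset _ _ _).mpr (hqadj x hxq b hb (fun h => hbx h.symm))
        have hbNz : b ∈ G.neighborFinset z :=
          (SimpleGraph.mem_neighborFinset _ _ _).mpr (hqadj z hzq b hb (fun h => hbz h.symm))
        rw [hNx] at hbNx; simp at hbNx
        rw [hNz] at hbNz; simp at hbNz
        rcases hbNx with rfl | rfl | rfl | rfl
        · exact (hyq hb).elim
        · exact (hbz rfl).elim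
        · rcases hbNz with h' | h' | h' | h'
          exacts [(hwx h').elim, (hwy h').elim, (huw h'.symm).elim, (hvw h'.symm).elim]
        · simp
      have hq' : q = {x, z, u} := hqmax.2 _ (isClique_triple axz axu azu) hsub
      constructor
      · intro hinner
        exfalso
        obtain ⟨_, _, hin⟩ := hinner
        obtain ⟨S4, hS4tri, hS4ne, hS4cap⟩ :=
          hin z (by rw [hq']; simp) u (by rw [hq']; simp) (Ne.symm huz)
        have hzS4 : z ∈ S4 := by
          have : z ∈ q ∩ S4 := by rw [hS4cap]; simp
          exact (Finset.mem_inter.mp this).2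
        have huS4 : u ∈ S4 := by
          have : u ∈ q ∩ S4 := by rw [hS4cap]; simp
          exact (Finset.mem_inter.mp this).2
        obtain ⟨t, htz, htu, hS4t⟩ := triple_eq hzS4 huS4 (Ne.symm huz) hS4tri.2
        have htq : t ∉ q := by
          intro h
          have : t ∈ q ∩ S4 := Finset.mem_inter.mpr ⟨h, by rw [hS4t]; simp⟩
          rw [hS4cap] at this; simp at this
          rcases this with h' | h'
          exacts [htz h', htu h']
        have htx : t ≠ x := fun h => htq (by rw [hq']; simp [h])
        have htS4 : t ∈ S4 := by rw [hS4t]; simp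
        have hazt : G.Adj z t := adjOf S4 hS4tri.1 z hzS4 t htS4 (Ne.symm htz)
        have haut : G.Adj u t := adjOf S4 hS4tri.1 u huS4 t htS4 (Ne.symm htu)
        have : t ∈ G.neighborFinset z := (SimpleGraph.mem_neighborFinset _ _ _).mpr hazt
        rw [hNz] at this; simp at this
        rcases this with rfl | rfl | rfl | rfl
        exacts [htx rfl, nyu haut.symm, htu rfl, nuv haut]
      · intro h
        exact absurd (by rw [h]; exact hyT') hyq
    · -- x ∈ q, y ∉ q, z ∉ q : |q ∩ T| ≤ 1
      exfalso
      have hsub : q ∩ T ⊆ {x} := by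
        intro t ht
        rw [Finset.mem_inter, hTz] at ht
        obtain ⟨h1, h2⟩ := ht
        simp at h2 ⊢
        rcases h2 with rfl | rfl | rfl
        exacts [rfl, (hyq h1).elim, (hzq h1).elim]
      have := Finset.card_le_card hsub
      simp at this; omega
    · -- y, z ∈ q, x ∉ q : q = {y,z,v}, not inner
      have hsub : q ⊆ {y, z, v} := by
        intro b hb
        by_cases hby : b = y
        · simp [hby]
        by_cases hbz : b = z
        · simp [hbz]
        have hbNy : b ∈ G.neighborFinset y :=
          (SimpleGraph.mem_neighborFinset _ _ _).mpr (hqadj y hyq b hb (fun h => hby h.symm))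
        have hbNz : b ∈ G.neighborFinset z :=
          (SimpleGraph.mem_neighborFinset _ _ _).mpr (hqadj z hzq b hb (fun h => hbz h.symm))
        rw [hNy] at hbNy; simp at hbNy
        rw [hNz] at hbNz; simp at hbNz
        rcases hbNy with rfl | rfl | rfl | rfl
        · exact (hxq hb).elim
        · exact (hbz rfl).elim
        · rcases hbNz with h' | h' | h' | h'
          exacts [(hwx h').elim, (hwy h').elim, (huw h'.symm).elim, (hvw h'.symm).elim]
        · simp
      have hq' : q = {y, z, v} := hqmax.2 _ (isClique_triple ayz ayv azv) hsub
      constructor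
      · intro hinner
        exfalso
        obtain ⟨_, _, hin⟩ := hinner
        obtain ⟨S4, hS4tri, hS4ne, hS4cap⟩ :=
          hin z (by rw [hq']; simp) v (by rw [hq']; simp) (Ne.symm hvz)
        have hzS4 : z ∈ S4 := by
          have : z ∈ q ∩ S4 := by rw [hS4cap]; simp
          exact (Finset.mem_inter.mp this).2
        have hvS4 : v ∈ S4 := by
          have : v ∈ q ∩ S4 := by rw [hS4cap]; simp
          exact (Finset.mem_inter.mp this).2
        obtain ⟨t, htz, htv, hS4t⟩ := triple_eq hzS4 hvS4 (Ne.symm hvz) hS4tri.2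
        have htq : t ∉ q := by
          intro h
          have : t ∈ q ∩ S4 := Finset.mem_inter.mpr ⟨h, by rw [hS4t]; simp⟩
          rw [hS4cap] at this; simp at this
          rcases this with h' | h'
          exacts [htz h', htv h']
        have hty : t ≠ y := fun h => htq (by rw [hq']; simp [h])
        have htS4 : t ∈ S4 := by rw [hS4t]; simp
        have hazt : G.Adj z t := adjOf S4 hS4tri.1 z hzS4 t htS4 (Ne.symm htz)
        have havt : G.Adj v t := adjOf S4 hS4tri.1 v hvS4 t htS4 (Ne.symm htv)
        have : t ∈ G.neighborFinset z := (SimpleGraph.mem_neighborFinset _ _ _).mpr hazt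
        rw [hNz] at this; simp at this
        rcases this with rfl | rfl | rfl | rfl
        exacts [nxv havt.symm, hty rfl, nuv havt.symm, htv rfl]
      · intro h
        have : w ∈ q := by rw [h]; exact hwT'
        rw [hq'] at this; simp at this
        rcases this with h' | h' | h'
        exacts [(hwy h').elim, (hzw h'.symm).elim, (hvw h'.symm).elim]
    · -- y ∈ q only
      exfalso
      have hsub : q ∩ T ⊆ {y} := by
        intro t ht
        rw [Finset.mem_inter, hTz] at ht
        obtain ⟨h1, h2⟩ := ht
        simp at h2 ⊢
        rcases h2 with rfl | rfl | rfl
        exacts [(hxq h1).elim, rfl, (hzq h1).elim]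
      have := Finset.card_le_card hsub
      simp at this; omega
    · -- z ∈ q only
      exfalso
      have hsub : q ∩ T ⊆ {z} := by
        intro t ht
        rw [Finset.mem_inter, hTz] at ht
        obtain ⟨h1, h2⟩ := ht
        simp at h2 ⊢
        rcases h2 with rfl | rfl | rfl
        exacts [(hxq h1).elim, (hyq h1).elim, rfl]
      have := Finset.card_le_card hsub
      simp at this; omega
    · -- none of x,y,z in q
      exfalso
      have hsub : q ∩ T ⊆ ∅ := by
        intro t ht
        rw [Finset.mem_inter, hTz] at ht
        obtain ⟨h1, h2⟩ := ht
        simp at h2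
        rcases h2 with rfl | rfl | rfl
        exacts [(hxq h1).elim, (hyq h1).elim, (hzq h1).elim]
      have hempty : q ∩ T = ∅ := Finset.subset_empty.mp hsub
      rw [hempty] at hqcard; simp at hqcard
  · -- normal vertices of T
    have hnormx : IsNormal G x := by
      refine ⟨fun q hq => hq.1, fun q hq r hr => ⟨x, hq.2, hr.2⟩, ?_⟩
      intro Q' hsub hmax' hpi
      refine Set.Subset.antisymm (fun q hq => ?_) hsub
      refine ⟨hmax' q hq, ?_⟩
      by_contra hxq
      have hqadj : ∀ a ∈ q, ∀ b ∈ q, a ≠ b → G.Adj a b := adjOf q (hmax' q hq).1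
      obtain ⟨a1, ha1q, ha1T⟩ := hpi q hq T (hsub ⟨hTmax, hxT⟩)
      rw [hTz] at ha1T; simp at ha1T
      have h1 : y ∈ q ∨ z ∈ q := by
        rcases ha1T with rfl | rfl | rfl
        exacts [(hxq ha1q).elim, Or.inl ha1q, Or.inr ha1q]
      obtain ⟨a2, ha2q, ha2T⟩ := hpi q hq T' (hsub ⟨hT'max, hxT'⟩)
      rw [hT'w] at ha2T; simp at ha2T
      have h2 : y ∈ q ∨ w ∈ q := by
        rcases ha2T with rfl | rfl | rfl
        exacts [(hxq ha2q).elim, Or.inl ha2q, Or.inr ha2q]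
      obtain ⟨a3, ha3q, ha3T⟩ := hpi q hq {x, z, u} (hsub ⟨Mxzu, by simp⟩)
      simp at ha3T
      have h3 : z ∈ q ∨ u ∈ q := by
        rcases ha3T with rfl | rfl | rfl
        exacts [(hxq ha3q).elim, Or.inl ha3q, Or.inr ha3q]
      obtain ⟨a4, ha4q, ha4T⟩ := hpi q hq {x, w, u} (hsub ⟨Mxwu, by simp⟩)
      simp at ha4T
      have h4 : w ∈ q ∨ u ∈ q := by
        rcases ha4T with rfl | rfl | rfl
        exacts [(hxq ha4q).elim, Or.inl ha4q, Or.inr ha4q]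
      rcases h1 with h1 | h1 <;> rcases h2 with h2 | h2 <;>
        rcases h3 with h3 | h3 <;> rcases h4 with h4 | h4 <;>
        first
          | exact nzw (hqadj z (by assumption) w (by assumption) hzw)
          | exact nyu (hqadj y (by assumption) u (by assumption) (Ne.symm huy))
    have hnormy : IsNormal G y := by
      refine ⟨fun q hq => hq.1, fun q hq r hr => ⟨y, hq.2, hr.2⟩, ?_⟩
      intro Q' hsub hmax' hpi
      refine Set.Subset.antisymm (fun q hq => ?_) hsub
      refine ⟨hmax' q hq, ?_⟩
      by_contra hyq
      have hqadj : ∀ a ∈ q, ∀ b ∈ q, a ≠ b → G.Adj a b := adjOf q (hmax' q hq).1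
      obtain ⟨a1, ha1q, ha1T⟩ := hpi q hq T (hsub ⟨hTmax, hyT⟩)
      rw [hTz] at ha1T; simp at ha1T
      have h1 : x ∈ q ∨ z ∈ q := by
        rcases ha1T with rfl | rfl | rfl
        exacts [Or.inl ha1q, (hyq ha1q).elim, Or.inr ha1q]
      obtain ⟨a2, ha2q, ha2T⟩ := hpi q hq T' (hsub ⟨hT'max, hyT'⟩)
      rw [hT'w] at ha2T; simp at ha2T
      have h2 : x ∈ q ∨ w ∈ q := by
        rcases ha2T with rfl | rfl | rfl
        exacts [Or.inl ha2q, (hyq ha2q).elim, Or.inr ha2q]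
      obtain ⟨a3, ha3q, ha3T⟩ := hpi q hq {y, z, v} (hsub ⟨Myzv, by simp⟩)
      simp at ha3T
      have h3 : z ∈ q ∨ v ∈ q := by
        rcases ha3T with rfl | rfl | rfl
        exacts [(hyq ha3q).elim, Or.inl ha3q, Or.inr ha3q]
      obtain ⟨a4, ha4q, ha4T⟩ := hpi q hq {y, w, v} (hsub ⟨Mywv, by simp⟩)
      simp at ha4T
      have h4 : w ∈ q ∨ v ∈ q := by
        rcases ha4T with rfl | rfl | rfl
        exacts [(hyq ha4q).elim, Or.inl ha4q, Or.inr ha4q]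
      rcases h1 with h1 | h1 <;> rcases h2 with h2 | h2 <;>
        rcases h3 with h3 | h3 <;> rcases h4 with h4 | h4 <;>
        first
          | exact nzw (hqadj z (by assumption) w (by assumption) hzw)
          | exact nxv (hqadj x (by assumption) v (by assumption) (Ne.symm hvx))
    have hnnormz : ¬ IsNormal G z := by
      intro hn
      obtain ⟨_, _, hmax'⟩ := hn
      have hmeet : ∀ q ∈ starOf G z, ∃ a, a ∈ q ∧ a ∈ T' := by
        intro q hq
        obtain ⟨hqm, hzq⟩ := hq
        by_cases hxq : x ∈ q
        · exact ⟨x, hxq, hxT'⟩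
        by_cases hyq : y ∈ q
        · exact ⟨y, hyq, hyT'⟩
        exfalso
        have hqadj : ∀ a ∈ q, ∀ b ∈ q, a ≠ b → G.Adj a b := adjOf q hqm.1
        by_cases huq : u ∈ q
        · have hvq : v ∉ q := fun h => nuv (hqadj u huq v h huv)
          have hsubq : q ⊆ {x, z, u} := by
            intro b hb
            by_cases hbz : b = z
            · simp [hbz]
            have : b ∈ G.neighborFinset z :=
              (SimpleGraph.mem_neighborFinset _ _ _).mpr (hqadj z hzq b hb (fun h => hbz h.symm))
            rw [hNz] at this; simp at this
            rcases this with rfl | rfl | rfl | rfl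
            exacts [(hxq hb).elim, (hyq hb).elim, by simp, (hvq hb).elim]
          have heq := hqm.2 _ (isClique_triple axz axu azu) hsubq
          exact hxq (by rw [heq]; simp)
        · have hsubq : q ⊆ {y, z, v} := by
            intro b hb
            by_cases hbz : b = z
            · simp [hbz]
            have : b ∈ G.neighborFinset z :=
              (SimpleGraph.mem_neighborFinset _ _ _).mpr (hqadj z hzq b hb (fun h => hbz h.symm))
            rw [hNz] at this; simp at this
            rcases this with rfl | rfl | rfl | rfl
            exacts [(hxq hb).elim, (hyq hb).elim, (huq hb).elim, by simp]
          have heq := hqm.2 _ (isClique_triple ayz ayv azv) hsubq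
          exact hyq (by rw [heq]; simp)
      have hkey := hmax' (starOf G z ∪ {T'}) Set.subset_union_left ?_ ?_
      · have hT'star : T' ∈ starOf G z := by
          rw [← hkey]; exact Or.inr rfl
        exact hzT' hT'star.2
      · intro q hq
        rcases hq with hq | hq
        · exact hq.1
        · rw [Set.mem_singleton_iff] at hq; rw [hq]; exact hT'max
      · intro q hq r hr
        rcases hq with hq | hq <;> rcases hr with hr | hr
        · exact ⟨z, hq.2, hr.2⟩
        · rw [Set.mem_singleton_iff] at hr; subst hr; exact hmeet q hq
        · rw [Set.mem_singleton_iff] at hq; subst hq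
          obtain ⟨a, h1, h2⟩ := hmeet r hr
          exact ⟨a, h2, h1⟩
        · rw [Set.mem_singleton_iff] at hq; subst hq
          rw [Set.mem_singleton_iff] at hr; subst hr
          exact ⟨x, hxT', hxT'⟩
    intro t ht
    rw [hTz] at ht; simp at ht
    rcases ht with rfl | rfl | rfl
    · exact iff_of_true hnormx (Or.inl rfl)
    · exact iff_of_true hnormy (Or.inr rfl)
    · exact iff_of_false hnnormz (fun h => h.elim (fun h => hzx h) (fun h => hzy h))
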